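/- Let x0 < 0 and let G₂(x) = g₂(x)/h(x) for x ∈ [2x0, 0], where g₂(x) = 4(2x − x0) g(x)^{3/2}, h(x) = ((x − x0)^2 + (4/9) g(x)^4)^{1/2} and g(x) = (9x(2x0 − x)/4)^{1/3}. Then |G₂(x)| ≤ C₁₃(x0) for every x ∈ [2x0, 0], where C₁₃(x0) = 2^{−19/6} · 3^{2/3} · (√33 + 3)(15 + √33)^{1/2} |x0|^{2/3} if −√3/4 ≤ x0 < 0, and C₁₃(x0) = 2^{−7/2} · 3 · (√33 + 3)(15 + √33)^{1/2} x0^2 / (x0^2 − 3/64)^{1/2} if x0 < −√3/4. -/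

import Mathlib

open Set

lemma rpow_pow_aux (a : ℝ) (ha : 0 ≤ a) (e : ℝ) (n : ℕ) :
    (a ^ e) ^ n = a ^ (e * n) := by
  rw [← Real.rpow_natCast (a ^ e) n, ← Real.rpow_mul ha]

lemma sqrt3_case1 (x0 : ℝ) (hx0 : x0 < 0) (hc : -Real.sqrt 3 / 4 ≤ x0) : x0^2 ≤ 3/16 := by
  have hs3 : Real.sqrt 3 ^ 2 = 3 := Real.sq_sqrt (by norm_num)
  nlinarith [Real.sqrt_nonneg 3]

lemma sqrt3_case2 (x0 : ℝ) (hc : x0 < -Real.sqrt 3 / 4) : 3/16 < x0^2 := by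
  have hs3 : Real.sqrt 3 ^ 2 = 3 := Real.sq_sqrt (by norm_num)
  nlinarith [Real.sqrt_nonneg 3]

lemma my_abs_le (a b : ℝ) (h : a^2 ≤ b^2) (hb : 0 ≤ b) : |a| ≤ b := by
  nlinarith [abs_nonneg a, sq_abs a]

lemma cube_le (a : ℝ) (ha : 0 < a) (h : a^3 ≤ 27/64) : a ≤ 3/4 := by
  nlinarith [sq_nonneg (a - 3/4), sq_nonneg (a + 3/4)]

lemma case1_min (κ m p : ℝ) (hκ0 : 0 < κ) (hm0 : 0 < m) (hp0 : 0 ≤ p) (hp1 : p ≤ 1)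
    (hκm : κ*m ≤ 3/4) : κ*m^4 ≤ m^3*(1-p^3) + κ*(m*p)^4 := by
  have hp2 : p^2 ≤ 1 := by nlinarith
  have h1p4 : (0:ℝ) ≤ 1 - p^4 := by nlinarith [hp2, sq_nonneg p]
  have h34 : (3:ℝ)/4*(1-p^4) ≤ 1 - p^3 := by
    nlinarith [mul_nonneg (sq_nonneg (p-1)) (show (0:ℝ) ≤ 3*p^2+2*p+1 by positivity)]
  have h2 : κ*m*(1-p^4) ≤ 1 - p^3 := by
    nlinarith [mul_le_mul_of_nonneg_right hκm h1p4]
  nlinarith [mul_le_mul_of_nonneg_left h2 (le_of_lt (pow_pos hm0 3))]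

lemma quartic_bound (x y r : ℝ) (hr2 : r ^ 2 = 33) (hr1 : 1 ≤ r) :
    (2*x - y)^2 * (x * (2*y - x)) ≤ (828 + 132*r)/512 * y^4 := by
  have key : (828 + 132*r)/512 * y^4 - (2*x - y)^2 * (x * (2*y - x))
      = 4 * (x - (7+r)/8*y)^2 * ((x + (r-5)/8*y)^2 + (r-1)/16 * y^2) := by
    linear_combination (-(y^4*r^2/1024 + y^4*r/128 - x^2*y^2/8 + x*y^3/8 + 19*y^4/1024)) * hr2
  have hq : (0:ℝ) ≤ (x + (r-5)/8*y)^2 + (r-1)/16 * y^2 :=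
    add_nonneg (sq_nonneg _)
      (mul_nonneg (div_nonneg (by linarith) (by norm_num)) (sq_nonneg y))
  have h4 : (0:ℝ) ≤ 4 * (x - (7+r)/8*y)^2 * ((x + (r-5)/8*y)^2 + (r-1)/16 * y^2) :=
    mul_nonneg (by positivity) hq
  linarith [key ▸ h4]

lemma u_bound (u κ : ℝ) (hu : 0 ≤ u) (hκ : 0 < κ) (hκ3 : κ^3 = 9/4) :
    0 ≤ κ*u^4 - u^3 + 3/64 := by
  have key : 16*κ^2*(κ*u^4 - u^3 + 3/64) = (4*κ*u - 3)^2 * (κ*u^2 + u/2 + κ^2/12) := by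
    linear_combination (-(4:ℝ)/3*u^2*κ + 2*u) * hκ3
  have hq : (0:ℝ) ≤ κ*u^2 + u/2 + κ^2/12 := by positivity
  have h0 : (0:ℝ) ≤ 16*κ^2*(κ*u^4 - u^3 + 3/64) := key ▸ mul_nonneg (sq_nonneg _) hq
  nlinarith [sq_nonneg κ, mul_pos hκ hκ]

lemma case2_min (κ m p : ℝ) (hκ0 : 0 < κ) (hκ3 : κ^3 = 9/4) (hm0 : 0 ≤ m) (hp0 : 0 ≤ p) :
    m^3 - 3/64 ≤ m^3*(1-p^3) + κ*(m*p)^4 := by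
  have := u_bound (m*p) κ (mul_nonneg hm0 hp0) hκ0 hκ3
  nlinarith [this]

lemma pow2_fact : ((2:ℝ)^(-(19:ℝ)/6))^2 * ((3:ℝ)^((2:ℝ)/3))^2 = (((9:ℝ)/4)^((1:ℝ)/3))^2 / 32 := by
  have ha : ((2:ℝ)^(-(19:ℝ)/6))^2 = 2^(-(19:ℝ)/3) := by
    rw [rpow_pow_aux _ (by norm_num)]; norm_num
  have hb : ((3:ℝ)^((2:ℝ)/3))^2 = 3^((4:ℝ)/3) := by
    rw [rpow_pow_aux _ (by norm_num)]; norm_num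
  have hk : (((9:ℝ)/4)^((1:ℝ)/3))^2 = ((9:ℝ)/4)^((2:ℝ)/3) := by
    rw [rpow_pow_aux _ (by norm_num)]; norm_num
  rw [ha, hb, hk]
  have h94 : ((9:ℝ)/4)^((2:ℝ)/3) = 3^((4:ℝ)/3) / 2^((4:ℝ)/3) := by
    rw [Real.div_rpow (by norm_num) (by norm_num)]
    congr 1
    · rw [show (9:ℝ) = 3^(2:ℕ) by norm_num, ← Real.rpow_natCast 3 2,
          ← Real.rpow_mul (by norm_num : (0:ℝ) ≤ 3)]
      norm_num
    · rw [show (4:ℝ) = 2^(2:ℕ) by norm_num, ← Real.rpow_natCast 2 2,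
          ← Real.rpow_mul (by norm_num : (0:ℝ) ≤ 2)]
      norm_num
  rw [h94]
  have hp43 : (0:ℝ) < 2^((4:ℝ)/3) := Real.rpow_pos_of_pos (by norm_num) _
  have h2a : (2:ℝ)^(-(19:ℝ)/3) = 1/32 / 2^((4:ℝ)/3) := by
    rw [eq_div_iff hp43.ne', ← Real.rpow_add (by norm_num : (0:ℝ) < 2)]
    rw [show (-(19:ℝ)/3 + (4:ℝ)/3) = ((-5:ℤ):ℝ) by norm_num, Real.rpow_intCast]
    norm_num
  rw [h2a]
  field_simp

set_option maxHeartbeats 1000000 in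
/-- Corollary 4.8, inequality (4.38): for every `x0 < 0`
the function `G₂ = g₂/h` satisfies `|G₂(x)| ≤ C₁₃(x0)` on `[2x0, 0]`, where
`C₁₃` takes different explicit values according to whether `-√3/4 ≤ x0 < 0`
or `x0 < -√3/4`. -/
theorem G2_abs_bound
    (x0 : ℝ) (hx0 : x0 < 0)
    (g h g2 G2 : ℝ → ℝ)
    (hg : ∀ x : ℝ, g x = (9 * x * (2 * x0 - x) / 4) ^ ((1 : ℝ) / 3))
    (hh : ∀ x : ℝ, h x = ((x - x0) ^ 2 + (4 / 9) * (g x) ^ 4) ^ ((1 : ℝ) / 2))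
    (hg2 : ∀ x : ℝ, g2 x = 4 * (2 * x - x0) * (g x) ^ ((3 : ℝ) / 2))
    (hG2 : ∀ x : ℝ, G2 x = g2 x / h x)
    (C13 : ℝ)
    (hC13 : C13 = if -Real.sqrt 3 / 4 ≤ x0 then
        (2 : ℝ) ^ (-(19 : ℝ) / 6) * 3 ^ ((2 : ℝ) / 3) * (Real.sqrt 33 + 3) *
          (15 + Real.sqrt 33) ^ ((1 : ℝ) / 2) * |x0| ^ ((2 : ℝ) / 3)
      else (2 : ℝ) ^ (-(7 : ℝ) / 2) * 3 * (Real.sqrt 33 + 3) *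
          (15 + Real.sqrt 33) ^ ((1 : ℝ) / 2) * x0 ^ 2 /
          (x0 ^ 2 - 3 / 64) ^ ((1 : ℝ) / 2)) :
    ∀ x ∈ Icc (2 * x0) 0, |G2 x| ≤ C13 := by
  intro x hx
  obtain ⟨hx1, hx2⟩ := hx
  set r := Real.sqrt 33 with hrdef
  have hr0 : 0 ≤ r := Real.sqrt_nonneg 33
  have hr2 : r^2 = 33 := Real.sq_sqrt (by norm_num)
  have hr5 : (5:ℝ) ≤ r := by nlinarith
  have h15 : (0:ℝ) ≤ 15 + r := by linarith
  set ρ := (15 + r) ^ ((1:ℝ)/2) with hρdef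
  have hρ0 : 0 ≤ ρ := Real.rpow_nonneg h15 _
  have hρ2 : ρ^2 = 15 + r := by
    rw [hρdef, rpow_pow_aux _ h15, show (1:ℝ)/2*((2:ℕ):ℝ) = 1 by norm_num, Real.rpow_one]
  have hx0sq : (0:ℝ) < x0^2 := by nlinarith
  set m := |x0| ^ ((2:ℝ)/3) with hm
  have hm0 : 0 < m := Real.rpow_pos_of_pos (abs_pos.mpr hx0.ne) _
  have hm3 : m^3 = x0^2 := by
    rw [hm, rpow_pow_aux _ (abs_nonneg x0)]; norm_num
  set κ := ((9:ℝ)/4) ^ ((1:ℝ)/3) with hκ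
  have hκ0 : 0 < κ := Real.rpow_pos_of_pos (by norm_num) _
  have hκ3 : κ^3 = 9/4 := by
    rw [hκ, rpow_pow_aux _ (by norm_num)]; norm_num
  set s := x * (2*x0 - x) / x0^2 with hs
  have hs0 : 0 ≤ s := div_nonneg (by nlinarith) (sq_nonneg _)
  have hs1 : s ≤ 1 := by
    rw [hs, div_le_one hx0sq]; nlinarith [sq_nonneg (x - x0)]
  set p := s ^ ((1:ℝ)/3) with hp
  have hp0 : 0 ≤ p := Real.rpow_nonneg hs0 _
  have hp1 : p ≤ 1 := Real.rpow_le_one hs0 hs1 (by norm_num)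
  have hp3 : p^3 = s := by
    rw [hp, rpow_pow_aux _ hs0]; norm_num
  have hxs : x0^2 * s = x * (2*x0 - x) := by
    rw [hs]; field_simp [hx0.ne]
  clear_value s p m κ r ρ
  have hx2m : (x0^2) ^ ((1:ℝ)/3) = m := by
    rw [← sq_abs, hm, ← Real.rpow_natCast |x0| 2, ← Real.rpow_mul (abs_nonneg x0)]
    norm_num
  have hgx : g x = κ * (m * p) := by
    rw [hg x, show 9 * x * (2*x0 - x) / 4 = (9/4) * (x0^2 * s) by rw [hxs]; ring,
        Real.mul_rpow (by norm_num) (mul_nonneg (sq_nonneg x0) hs0),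
        Real.mul_rpow (sq_nonneg x0) hs0, hx2m, ← hp, ← hκ]
  have hgnn : 0 ≤ g x := by rw [hgx]; positivity
  have hg2sq : (g2 x)^2 = 36*(2*x - x0)^2*(m^3*p^3) := by
    rw [hg2 x]
    have h32 : ((g x) ^ ((3:ℝ)/2))^2 = (g x)^3 := by
      rw [rpow_pow_aux _ hgnn, show (3:ℝ)/2 * ((2:ℕ):ℝ) = ((3:ℕ):ℝ) by norm_num,
          Real.rpow_natCast]
    calc (4*(2*x - x0) * (g x)^((3:ℝ)/2))^2
        = 16*(2*x - x0)^2 * ((g x)^((3:ℝ)/2))^2 := by ring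
      _ = 16*(2*x - x0)^2 * (g x)^3 := by rw [h32]
      _ = 16*(2*x - x0)^2 * (κ^3 * (m^3*p^3)) := by rw [hgx]; ring
      _ = 36*(2*x - x0)^2*(m^3*p^3) := by rw [hκ3]; ring
  have hhsq : (h x)^2 = m^3*(1 - p^3) + κ*(m*p)^4 := by
    rw [hh x]
    have hE : (0:ℝ) ≤ (x - x0)^2 + 4/9*(g x)^4 := by positivity
    rw [rpow_pow_aux _ hE, show (1:ℝ)/2 * ((2:ℕ):ℝ) = (1:ℝ) by norm_num, Real.rpow_one]
    have e1 : (x - x0)^2 = m^3*(1 - p^3) := by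
      linear_combination (p^3 - 1) * hm3 + x0^2 * hp3 + hxs
    have e2 : (4:ℝ)/9*(g x)^4 = κ*(m*p)^4 := by
      rw [hgx]; linear_combination (4/9*(m*p)^4*κ) * hκ3
    linarith [e1, e2]
  have hhnn : 0 ≤ h x := by rw [hh x]; positivity
  have hΦ0 : (0:ℝ) ≤ 828 + 132*r := by linarith
  -- numerator bound
  have hQ : (2*x - x0)^2 * (m^3*p^3) ≤ (828 + 132*r)/512 * (m^3)^2 := by
    rw [hm3, hp3, hxs, show ((x0^2)^2 : ℝ) = x0^4 by ring]
    exact quartic_bound x x0 r hr2 (by linarith)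
  have hg2le : (g2 x)^2 ≤ 36*((828 + 132*r)/512)*(m^3)^2 := by
    rw [hg2sq]; linarith [hQ]
  rcases le_or_gt (-Real.sqrt 3 / 4) x0 with hc | hc
  · -- case 1 : x0^2 ≤ 3/16
    have hx316 : x0^2 ≤ 3/16 := sqrt3_case1 x0 hx0 hc
    have hcube : (κ*m)^3 ≤ 27/64 := by
      have : (κ*m)^3 = κ^3*m^3 := by ring
      rw [this, hκ3, hm3]; linarith
    have hκm : κ*m ≤ 3/4 := cube_le _ (mul_pos hκ0 hm0) hcube
    have hmin : κ * m^4 ≤ (h x)^2 := by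
      rw [hhsq]; exact case1_min κ m p hκ0 hm0 hp0 hp1 hκm
    have hhpos : 0 < h x := by
      rcases hhnn.lt_or_eq with h' | h'
      · exact h'
      · exfalso; rw [← h'] at hmin; simp at hmin
        have := mul_pos hκ0 (pow_pos hm0 4)
        linarith
    rw [hC13, if_pos hc, hG2 x, abs_div, abs_of_pos hhpos, div_le_iff₀ hhpos]
    set K := (2:ℝ) ^ (-(19:ℝ)/6) * 3 ^ ((2:ℝ)/3) * (r + 3) * ρ * m with hK
    have hK0 : 0 ≤ K := by
      rw [hK]
      have := Real.rpow_nonneg (show (0:ℝ) ≤ 2 by norm_num) (-(19:ℝ)/6)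
      have := Real.rpow_nonneg (show (0:ℝ) ≤ 3 by norm_num) ((2:ℝ)/3)
      positivity
    have hpow : ((2:ℝ)^(-(19:ℝ)/6))^2 * ((3:ℝ)^((2:ℝ)/3))^2 = κ^2 / 32 := by
      rw [hκ]; exact pow2_fact
    have hC2 : K^2 = κ^2*m^2*(828+132*r)/32 := by
      have e : K^2 = (((2:ℝ)^(-(19:ℝ)/6))^2 * ((3:ℝ)^((2:ℝ)/3))^2) * ((r+3)^2 * ρ^2) * m^2 := by
        rw [hK]; ring
      rw [e, hpow, hρ2]
      linear_combination (m^2*κ^2/32*(r + 21)) * hr2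
    have step : κ^2*m^2*(828+132*r)/32 * (κ*m^4) ≤ K^2 * (h x)^2 := by
      rw [hC2]
      exact mul_le_mul_of_nonneg_left hmin (by positivity)
    have e3 : κ^2*m^2*(828+132*r)/32*(κ*m^4) = 36*((828+132*r)/512)*(m^3)^2 := by
      linear_combination ((828+132*r)*m^6/32) * hκ3
    have hsqle : (g2 x)^2 ≤ (K * h x)^2 := by
      have : (K * h x)^2 = K^2*(h x)^2 := by ring
      rw [this]; linarith [hg2le, step, e3]
    exact my_abs_le _ _ hsqle (mul_nonneg hK0 hhnn)
  · -- case 2 : 3/16 < x0^2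
    have hx316 : 3/16 < x0^2 := sqrt3_case2 x0 hc
    have hd : (0:ℝ) < x0^2 - 3/64 := by linarith
    have hmind : m^3 - 3/64 ≤ (h x)^2 := by
      rw [hhsq]; exact case2_min κ m p hκ0 hκ3 hm0.le hp0
    have hm364 : (0:ℝ) < m^3 - 3/64 := by rw [hm3]; linarith
    have hhpos : 0 < h x := by
      rcases hhnn.lt_or_eq with h' | h'
      · exact h'
      · exfalso; rw [← h'] at hmind; simp at hmind; linarith
    rw [hC13, if_neg (not_le.mpr hc), hG2 x, abs_div, abs_of_pos hhpos, div_le_iff₀ hhpos]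
    set σ := (x0^2 - 3/64) ^ ((1:ℝ)/2) with hσdef
    have hσ0 : 0 < σ := Real.rpow_pos_of_pos hd _
    have hσ2 : σ^2 = m^3 - 3/64 := by
      rw [hσdef, rpow_pow_aux _ hd.le, show (1:ℝ)/2*((2:ℕ):ℝ) = 1 by norm_num,
          Real.rpow_one, hm3]
    set N := (2:ℝ) ^ (-(7:ℝ)/2) * 3 * (r + 3) * ρ * x0^2 with hN
    have hN0 : 0 ≤ N := by
      rw [hN]
      have := Real.rpow_nonneg (show (0:ℝ) ≤ 2 by norm_num) (-(7:ℝ)/2)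
      positivity
    have h2sq : ((2:ℝ)^(-(7:ℝ)/2))^2 = 1/128 := by
      rw [rpow_pow_aux _ (by norm_num), show -(7:ℝ)/2*((2:ℕ):ℝ) = ((-7:ℤ):ℝ) by norm_num,
          Real.rpow_intCast]
      norm_num
    have hN2 : N^2 = 36*((828+132*r)/512)*(m^3)^2 := by
      have e : N^2 = ((2:ℝ)^(-(7:ℝ)/2))^2 * 9 * ((r+3)^2*ρ^2) * (x0^2)^2 := by
        rw [hN]; ring
      rw [e, h2sq, hρ2, ← hm3]
      linear_combination ((m^3)^2*9/128*(r + 21)) * hr2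
    have hsqle : (g2 x)^2 ≤ (N / σ * h x)^2 := by
      have e : (N / σ * h x)^2 = N^2*(h x)^2/σ^2 := by
        field_simp
      rw [e, le_div_iff₀ (by positivity : (0:ℝ) < σ^2)]
      have h1 : (g2 x)^2 * σ^2 ≤ N^2 * σ^2 := by
        rw [hN2]; exact mul_le_mul_of_nonneg_right hg2le (sq_nonneg σ)
      have h2 : N^2 * σ^2 ≤ N^2 * (h x)^2 := by
        rw [hσ2]; exact mul_le_mul_of_nonneg_left hmind (by positivity)
      linarith
    exact my_abs_le _ _ hsqle (mul_nonneg (div_nonneg hN0 hσ0.le) hhnn)
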